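/- Let (R, m) be a commutative noetherian local ring and let M, N be R-modules with M ≠ mM and N ≠ mN. Then ldim_R(M ⊗_R N) ≤ min{ ldim_R M, ldim_R N }. -/

import Mathlib

open IsLocalRing CategoryTheory

/-- Krull dimension of a module: the Krull dimension of its support. -/
noncomputable def mdim (R : Type*) [CommRing R] (M : Type*) [AddCommGroup M] [Module R M] :
    WithBot ℕ∞ :=
  Order.krullDim (Module.support R M)

/-- The little dimension of a module over a local ring:
`ldim_R M = inf { dim_R (Rx) : x ∈ M \ mM }` (infimum over the empty set is `⊤`). -/
noncomputable def ldim (R : Type*) [CommRing R] [IsLocalRing R] (M : Type*) [AddCommGroup M]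
    [Module R M] : WithBot ℕ∞ :=
  ⨅ x : {x : M // x ∉ (maximalIdeal R • ⊤ : Submodule R M)},
    mdim R (Submodule.span R {x.1})

/-- Depth of a module over a local ring: the supremum of lengths of regular sequences on `M`
consisting of elements of the maximal ideal. -/
noncomputable def mdepth (R : Type*) [CommRing R] [IsLocalRing R] (M : Type*) [AddCommGroup M]
    [Module R M] : ℕ∞ :=
  sSup {n : ℕ∞ | ∃ rs : List R, (rs.length : ℕ∞) = n ∧ (∀ r ∈ rs, r ∈ maximalIdeal R) ∧
    RingTheory.Sequence.IsRegular M rs}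

section aux

set_option maxHeartbeats 1000000

variable {R : Type*} [CommRing R] {M N : Type*} [AddCommGroup M] [Module R M]
  [AddCommGroup N] [Module R N]

lemma quot_smul_eq (I : Ideal R) (r : R) (v : M ⧸ (I • ⊤ : Submodule R M)) :
    r • v = Ideal.Quotient.mk I r • v := by
  obtain ⟨m, rfl⟩ := Submodule.Quotient.mk_surjective _ v
  rw [Module.Quotient.mk_smul_mk, Submodule.Quotient.mk_smul]

lemma tmul_not_mem (I : Ideal R) [I.IsMaximal] {x : M} {y : N}
    (hx : x ∉ (I • ⊤ : Submodule R M)) (hy : y ∉ (I • ⊤ : Submodule R N)) :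
    x ⊗ₜ[R] y ∉ (I • ⊤ : Submodule R (TensorProduct R M N)) := by
  set Mb := M ⧸ (I • ⊤ : Submodule R M) with hMb
  set Nb := N ⧸ (I • ⊤ : Submodule R N) with hNb
  have hxb : (Submodule.Quotient.mk x : Mb) ≠ 0 := by
    simpa [Submodule.Quotient.mk_eq_zero] using hx
  have hyb : (Submodule.Quotient.mk y : Nb) ≠ 0 := by
    simpa [Submodule.Quotient.mk_eq_zero] using hy
  haveI hproj : Module.Projective (R ⧸ I) Mb := by
    letI := Ideal.Quotient.field I; infer_instance
  have : ¬ ∀ φ : Module.Dual (R ⧸ I) Mb, φ (Submodule.Quotient.mk x) = 0 := by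
    rw [Module.forall_dual_apply_eq_zero_iff]; exact hxb
  obtain ⟨φ, hφ⟩ := not_forall.mp this
  let b : M →ₗ[R] N →ₗ[R] Nb := LinearMap.mk₂ R
    (fun m n => φ (Submodule.Quotient.mk m) • (Submodule.Quotient.mk n : Nb))
    (fun m₁ m₂ n => by rw [Submodule.Quotient.mk_add, map_add, add_smul])
    (fun r m n => by
      rw [Submodule.Quotient.mk_smul, quot_smul_eq I r (Submodule.Quotient.mk m),
        map_smul, smul_eq_mul, mul_smul, quot_smul_eq I r (φ _ • _)])
    (fun m n₁ n₂ => by rw [Submodule.Quotient.mk_add, smul_add])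
    (fun r m n => by
      rw [Submodule.Quotient.mk_smul, quot_smul_eq I r (Submodule.Quotient.mk n),
        quot_smul_eq I r (φ _ • _), smul_smul, smul_smul, mul_comm])
  let T : TensorProduct R M N →ₗ[R] Nb := TensorProduct.lift b
  have hT0 : ∀ z ∈ (I • ⊤ : Submodule R (TensorProduct R M N)), T z = 0 := by
    intro z hz
    refine Submodule.smul_induction_on hz (fun r hr t _ => ?_) (fun a b ha hb => by
      rw [map_add, ha, hb, add_zero])
    rw [map_smul, quot_smul_eq I r, Ideal.Quotient.eq_zero_iff_mem.mpr hr, zero_smul]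
  intro hmem
  have hz : φ (Submodule.Quotient.mk x) • (Submodule.Quotient.mk y : Nb) = 0 := hT0 _ hmem
  refine hyb ?_
  letI : Field (R ⧸ I) := Ideal.Quotient.field I
  calc (Submodule.Quotient.mk y : Nb)
      = (φ (Submodule.Quotient.mk x))⁻¹ • (φ (Submodule.Quotient.mk x)
          • (Submodule.Quotient.mk y : Nb)) := by
        rw [smul_smul, inv_mul_cancel₀ hφ, one_smul]
    _ = 0 := by rw [hz, smul_zero]


lemma mdim_tmul_le_left {R : Type*} [CommRing R] {M N : Type*} [AddCommGroup M] [Module R M]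
    [AddCommGroup N] [Module R N] (x : M) (y : N) :
    mdim R (Submodule.span R {x ⊗ₜ[R] y}) ≤ mdim R (Submodule.span R {x}) := by
  let g : M →ₗ[R] TensorProduct R M N := (TensorProduct.mk R M N).flip y
  have hmap : Submodule.map g (Submodule.span R {x}) = Submodule.span R {x ⊗ₜ[R] y} := by
    rw [Submodule.map_span, Set.image_singleton]; rfl
  have hle : ∀ m ∈ Submodule.span R {x}, g m ∈ Submodule.span R {x ⊗ₜ[R] y} := fun m hm =>
    hmap ▸ Submodule.mem_map_of_mem hm
  have hsurj : Function.Surjective (g.restrict hle) := by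
    rintro ⟨z, hz⟩
    rw [← hmap] at hz
    obtain ⟨m, hm, rfl⟩ := hz
    exact ⟨⟨m, hm⟩, rfl⟩
  have hsupp := Module.support_subset_of_surjective (g.restrict hle) hsurj
  exact Order.krullDim_le_of_strictMono (Set.inclusion hsupp) (fun a b h => h)

lemma mdim_tmul_le_right {R : Type*} [CommRing R] {M N : Type*} [AddCommGroup M] [Module R M]
    [AddCommGroup N] [Module R N] (x : M) (y : N) :
    mdim R (Submodule.span R {x ⊗ₜ[R] y}) ≤ mdim R (Submodule.span R {y}) := by
  let g : N →ₗ[R] TensorProduct R M N := TensorProduct.mk R M N x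
  have hmap : Submodule.map g (Submodule.span R {y}) = Submodule.span R {x ⊗ₜ[R] y} := by
    rw [Submodule.map_span, Set.image_singleton]; rfl
  have hle : ∀ n ∈ Submodule.span R {y}, g n ∈ Submodule.span R {x ⊗ₜ[R] y} := fun n hn =>
    hmap ▸ Submodule.mem_map_of_mem hn
  have hsurj : Function.Surjective (g.restrict hle) := by
    rintro ⟨z, hz⟩
    rw [← hmap] at hz
    obtain ⟨n, hn, rfl⟩ := hz
    exact ⟨⟨n, hn⟩, rfl⟩
  have hsupp := Module.support_subset_of_surjective (g.restrict hle) hsurj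
  exact Order.krullDim_le_of_strictMono (Set.inclusion hsupp) (fun a b h => h)

end aux

/-- `ldim_R (M ⊗_R N) ≤ min (ldim_R M) (ldim_R N)` when `M ≠ mM` and `N ≠ mN`. -/
theorem stmt_2 (R : Type*) [CommRing R] [IsLocalRing R] [IsNoetherianRing R]
    (M N : Type*) [AddCommGroup M] [Module R M] [AddCommGroup N] [Module R N]
    (hM : (maximalIdeal R • ⊤ : Submodule R M) ≠ ⊤)
    (hN : (maximalIdeal R • ⊤ : Submodule R N) ≠ ⊤) :
    ldim R (TensorProduct R M N) ≤ min (ldim R M) (ldim R N) := by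
  obtain ⟨x₀, hx₀⟩ : ∃ x : M, x ∉ (maximalIdeal R • ⊤ : Submodule R M) := by
    by_contra h; push_neg at h
    exact hM (Submodule.eq_top_iff'.mpr h)
  obtain ⟨y₀, hy₀⟩ : ∃ y : N, y ∉ (maximalIdeal R • ⊤ : Submodule R N) := by
    by_contra h; push_neg at h
    exact hN (Submodule.eq_top_iff'.mpr h)
  refine le_min ?_ ?_
  · refine le_iInf fun x => ?_
    exact iInf_le_of_le ⟨x.1 ⊗ₜ[R] y₀, tmul_not_mem _ x.2 hy₀⟩ (mdim_tmul_le_left x.1 y₀)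
  · refine le_iInf fun y => ?_
    exact iInf_le_of_le ⟨x₀ ⊗ₜ[R] y.1, tmul_not_mem _ hx₀ y.2⟩ (mdim_tmul_le_right x₀ y.1)
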